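/- Let n ≥ 1 and 0 ≤ a < n/2 (more precisely 2a < n). There exists a constant C > 0 depending only on n and a such that for every r > 0 and every x, y ∈ ℝ^n \ {0}, (1/r^n) ∫_{B_r} |x+z|^{-a} |y+z|^{-a} dz ≤ C |x|^{-a} |y|^{-a}, where B_r ⊂ ℝ^n is the ball of radius r centered at 0. -/

import Mathlib

open MeasureTheory Metric Set
open scoped ENNReal

private lemma pow_rpow_comm {x : ℝ} (hx : 0 ≤ x) (k : ℕ) (y : ℝ) :
    (x ^ k) ^ y = (x ^ y) ^ k := by
  rw [← Real.rpow_natCast x k, ← Real.rpow_mul hx, mul_comm, Real.rpow_mul hx,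
    Real.rpow_natCast]

private lemma real_calc {R c b : ℝ} (n : ℕ) (hR : 0 < R) (hc : 0 < c) :
    (R * c) ^ n * (R * (c / 2)) ^ (-b) = 2 ^ b * (R ^ ((n : ℝ) - b) * c ^ ((n : ℝ) - b)) := by
  have hRb : (0:ℝ) < R ^ b := Real.rpow_pos_of_pos hR b
  have hcb : (0:ℝ) < c ^ b := Real.rpow_pos_of_pos hc b
  have h2b : (0:ℝ) < (2:ℝ) ^ b := Real.rpow_pos_of_pos two_pos b
  have e1 : (R * (c / 2)) ^ (-b) = 2 ^ b / (R ^ b * c ^ b) := by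
    rw [Real.rpow_neg (by positivity), Real.mul_rpow hR.le (by positivity),
      Real.div_rpow hc.le (by norm_num)]
    field_simp
  have e2 : R ^ ((n : ℝ) - b) = R ^ (n : ℕ) / R ^ b := by
    rw [Real.rpow_sub hR, Real.rpow_natCast]
  have e3 : c ^ ((n : ℝ) - b) = c ^ (n : ℕ) / c ^ b := by
    rw [Real.rpow_sub hc, Real.rpow_natCast]
  rw [e1, e2, e3, mul_pow]
  field_simp

private lemma aux_ball {n : ℕ} (hn : 1 ≤ n) {b : ℝ} (hb : 0 ≤ b) (hb' : b < n) :
    ∃ K : ℝ, 0 < K ∧ ∀ R : ℝ, 0 < R →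
      ∫⁻ w in Metric.ball (0 : EuclideanSpace ℝ (Fin n)) R, ENNReal.ofReal (‖w‖ ^ (-b)) ≤
        ENNReal.ofReal (K * R ^ ((n : ℝ) - b)) := by
  classical
  haveI : Nonempty (Fin n) := ⟨⟨0, hn⟩⟩
  haveI : Nontrivial (EuclideanSpace ℝ (Fin n)) :=
    ⟨0, EuclideanSpace.single ⟨0, hn⟩ 1, by
      intro h
      have := congrArg (fun v => v ⟨0, hn⟩) h
      simp [EuclideanSpace.single_apply] at this⟩
  set V1 : ℝ≥0∞ := volume (Metric.ball (0 : EuclideanSpace ℝ (Fin n)) 1) with hV1def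
  have hV1top : V1 ≠ ⊤ := measure_ball_lt_top.ne
  set qr : ℝ := (1/2 : ℝ) ^ ((n : ℝ) - b) with hqrdef
  have hqr0 : 0 < qr := Real.rpow_pos_of_pos (by norm_num) _
  have hqr1 : qr < 1 :=
    Real.rpow_lt_one (by norm_num) (by norm_num) (by linarith)
  set q : ℝ≥0∞ := ENNReal.ofReal qr with hqdef
  have hq1 : q < 1 := by
    rw [hqdef]
    exact ENNReal.ofReal_lt_one.2 hqr1
  set Kc : ℝ≥0∞ := V1 * ENNReal.ofReal (2 ^ b) * (1 - q)⁻¹ with hKcdef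
  have hKctop : Kc ≠ ⊤ := by
    apply ENNReal.mul_ne_top (ENNReal.mul_ne_top hV1top ENNReal.ofReal_ne_top)
    rw [ENNReal.inv_ne_top]
    exact (tsub_pos_of_lt hq1).ne'
  refine ⟨Kc.toReal + 1, by positivity, fun R hR => ?_⟩
  set A : ℕ → Set (EuclideanSpace ℝ (Fin n)) :=
    fun k => {w | R * (1/2:ℝ) ^ (k+1) ≤ ‖w‖ ∧ ‖w‖ < R * (1/2:ℝ) ^ k} with hAdef
  -- the ball minus the origin is covered by the dyadic shells
  have hsub : Metric.ball (0 : EuclideanSpace ℝ (Fin n)) R \ {0} ⊆ ⋃ k, A k := by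
    rintro w ⟨hwball, hw0⟩
    have hw : 0 < ‖w‖ := norm_pos_iff.2 (by simpa using hw0)
    have hwR : ‖w‖ < R := mem_ball_zero_iff.1 hwball
    have hex : ∃ k : ℕ, R * (1/2:ℝ) ^ (k+1) ≤ ‖w‖ := by
      obtain ⟨m, hm⟩ := exists_pow_lt_of_lt_one (div_pos hw hR) (by norm_num : (1/2:ℝ) < 1)
      refine ⟨m, ?_⟩
      have h1 : (1/2:ℝ) ^ (m+1) ≤ (1/2:ℝ) ^ m := by
        apply pow_le_pow_of_le_one (by norm_num) (by norm_num)
        omega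
      have h2 : R * (1/2:ℝ) ^ m < ‖w‖ := by
        have := (lt_div_iff₀ hR).1 hm
        linarith
      nlinarith [mul_le_mul_of_nonneg_left h1 hR.le]
    refine mem_iUnion.2 ⟨Nat.find hex, Nat.find_spec hex, ?_⟩
    rcases Nat.eq_zero_or_pos (Nat.find hex) with h0 | h0
    · rw [h0]
      simpa using hwR
    · have hmin := Nat.find_min hex (Nat.sub_lt h0 one_pos)
      have heq : Nat.find hex - 1 + 1 = Nat.find hex := by omega
      rw [heq] at hmin
      exact lt_of_not_ge hmin
  -- bound the integral over each shell
  have hA : ∀ k : ℕ, ∫⁻ w in A k, ENNReal.ofReal (‖w‖ ^ (-b)) ≤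
      V1 * ENNReal.ofReal (2 ^ b * R ^ ((n:ℝ) - b)) * q ^ k := by
    intro k
    have hsk : (0:ℝ) < R * (1/2:ℝ) ^ k := by positivity
    have hsk1 : (0:ℝ) < R * (1/2:ℝ) ^ (k+1) := by positivity
    have hbd : ∀ w ∈ A k, ENNReal.ofReal (‖w‖ ^ (-b)) ≤
        ENNReal.ofReal ((R * (1/2:ℝ) ^ (k+1)) ^ (-b)) := fun w hw =>
      ENNReal.ofReal_le_ofReal
        (Real.rpow_le_rpow_of_nonpos hsk1 hw.1 (neg_nonpos.2 hb))
    calc ∫⁻ w in A k, ENNReal.ofReal (‖w‖ ^ (-b))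
        ≤ ∫⁻ _ in A k, ENNReal.ofReal ((R * (1/2:ℝ) ^ (k+1)) ^ (-b)) :=
          setLIntegral_mono measurable_const hbd
      _ = ENNReal.ofReal ((R * (1/2:ℝ) ^ (k+1)) ^ (-b)) * volume (A k) :=
          setLIntegral_const _ _
      _ ≤ ENNReal.ofReal ((R * (1/2:ℝ) ^ (k+1)) ^ (-b)) *
            (ENNReal.ofReal ((R * (1/2:ℝ) ^ k) ^ n) * V1) := by
          gcongr
          calc volume (A k)
              ≤ volume (Metric.ball (0 : EuclideanSpace ℝ (Fin n)) (R * (1/2:ℝ) ^ k)) :=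
                measure_mono fun w hw => mem_ball_zero_iff.2 hw.2
            _ = ENNReal.ofReal ((R * (1/2:ℝ) ^ k) ^ n) * V1 := by
                rw [hV1def, Measure.addHaar_ball volume (0 : EuclideanSpace ℝ (Fin n)) hsk.le,
                  finrank_euclideanSpace_fin]
      _ = V1 * ENNReal.ofReal ((R * (1/2:ℝ) ^ k) ^ n * (R * (1/2:ℝ) ^ (k+1)) ^ (-b)) := by
          rw [ENNReal.ofReal_mul (by positivity)]
          ring
      _ = V1 * ENNReal.ofReal (2 ^ b * R ^ ((n:ℝ) - b)) * q ^ k := by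
          have hpow : (R * (1/2:ℝ) ^ k) ^ n * (R * (1/2:ℝ) ^ (k+1)) ^ (-b)
              = (2 ^ b * R ^ ((n:ℝ) - b)) * qr ^ k := by
            have h1 : (1/2:ℝ) ^ (k+1) = (1/2:ℝ) ^ k / 2 := by
              rw [pow_succ]; ring
            rw [h1, real_calc n hR (by positivity),
              pow_rpow_comm (by norm_num : (0:ℝ) ≤ 1/2) k ((n:ℝ) - b), ← hqrdef]
            ring
          rw [hpow, ENNReal.ofReal_mul (by positivity),
            ENNReal.ofReal_pow hqr0.le, ← hqdef, mul_assoc]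
  -- put everything together
  have h0 : (Metric.ball (0 : EuclideanSpace ℝ (Fin n)) R \ {0} : Set _)
      =ᵐ[volume] Metric.ball (0 : EuclideanSpace ℝ (Fin n)) R := by
    refine diff_ae_eq_self.2 ?_
    exact measure_mono_null inter_subset_right (measure_singleton 0)
  calc ∫⁻ w in Metric.ball (0 : EuclideanSpace ℝ (Fin n)) R, ENNReal.ofReal (‖w‖ ^ (-b))
      = ∫⁻ w in Metric.ball (0 : EuclideanSpace ℝ (Fin n)) R \ {0},
          ENNReal.ofReal (‖w‖ ^ (-b)) := (setLIntegral_congr h0).symm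
    _ ≤ ∫⁻ w in ⋃ k, A k, ENNReal.ofReal (‖w‖ ^ (-b)) := lintegral_mono_set hsub
    _ ≤ ∑' k, ∫⁻ w in A k, ENNReal.ofReal (‖w‖ ^ (-b)) := lintegral_iUnion_le _ _
    _ ≤ ∑' k, V1 * ENNReal.ofReal (2 ^ b * R ^ ((n:ℝ) - b)) * q ^ k :=
        ENNReal.tsum_le_tsum hA
    _ = V1 * ENNReal.ofReal (2 ^ b * R ^ ((n:ℝ) - b)) * (1 - q)⁻¹ := by
        rw [ENNReal.tsum_mul_left, ENNReal.tsum_geometric]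
    _ = Kc * ENNReal.ofReal (R ^ ((n:ℝ) - b)) := by
        rw [hKcdef, ENNReal.ofReal_mul (by positivity)]
        ring
    _ ≤ ENNReal.ofReal (Kc.toReal + 1) * ENNReal.ofReal (R ^ ((n:ℝ) - b)) := by
        gcongr
        calc Kc = ENNReal.ofReal Kc.toReal := (ENNReal.ofReal_toReal hKctop).symm
          _ ≤ ENNReal.ofReal (Kc.toReal + 1) := ENNReal.ofReal_le_ofReal (by linarith)
    _ = ENNReal.ofReal ((Kc.toReal + 1) * R ^ ((n:ℝ) - b)) := by
        rw [ENNReal.ofReal_mul (by positivity)]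

private lemma aux_key {n : ℕ} (hn : 1 ≤ n) {b : ℝ} (hb : 0 ≤ b) (hb' : b < n) :
    ∃ C : ℝ, 0 < C ∧ ∀ r : ℝ, 0 < r → ∀ x : EuclideanSpace ℝ (Fin n), x ≠ 0 →
      ∫⁻ z in Metric.ball (0 : EuclideanSpace ℝ (Fin n)) r, ENNReal.ofReal (‖x + z‖ ^ (-b)) ≤
        ENNReal.ofReal (C * (r ^ n * ‖x‖ ^ (-b))) := by
  obtain ⟨K, hK, hKball⟩ := aux_ball hn hb hb'
  haveI : Nonempty (Fin n) := ⟨⟨0, hn⟩⟩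
  haveI : Nontrivial (EuclideanSpace ℝ (Fin n)) :=
    ⟨0, EuclideanSpace.single ⟨0, hn⟩ 1, by
      intro h
      have := congrArg (fun v => v ⟨0, hn⟩) h
      simp [EuclideanSpace.single_apply] at this⟩
  set V1 : ℝ≥0∞ := volume (Metric.ball (0 : EuclideanSpace ℝ (Fin n)) 1) with hV1def
  have hV1top : V1 ≠ ⊤ := measure_ball_lt_top.ne
  have h2b : (0:ℝ) < (2:ℝ) ^ b := Real.rpow_pos_of_pos two_pos b
  refine ⟨2 ^ b * (V1.toReal + 1) + K * 3 ^ n * 2 ^ b, by positivity, fun r hr x hx => ?_⟩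
  have hxpos : 0 < ‖x‖ := norm_pos_iff.2 hx
  have hP : (0:ℝ) ≤ r ^ n * ‖x‖ ^ (-b) := by positivity
  rcases le_or_gt (2 * r) ‖x‖ with hcase | hcase
  · -- far case : `‖x‖ ≥ 2r`
    have hpt : ∀ z ∈ Metric.ball (0 : EuclideanSpace ℝ (Fin n)) r,
        ENNReal.ofReal (‖x + z‖ ^ (-b)) ≤ ENNReal.ofReal ((‖x‖ / 2) ^ (-b)) := by
      intro z hz
      have hz' : ‖z‖ < r := mem_ball_zero_iff.1 hz
      have hge : ‖x‖ / 2 ≤ ‖x + z‖ := by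
        have h1 : ‖x‖ ≤ ‖x + z‖ + ‖z‖ := by
          calc ‖x‖ = ‖(x + z) - z‖ := by rw [add_sub_cancel_right]
            _ ≤ ‖x + z‖ + ‖z‖ := norm_sub_le _ _
        linarith
      exact ENNReal.ofReal_le_ofReal
        (Real.rpow_le_rpow_of_nonpos (by positivity) hge (neg_nonpos.2 hb))
    have hdiv : (‖x‖ / 2) ^ (-b) = 2 ^ b * ‖x‖ ^ (-b) := by
      rw [Real.div_rpow (norm_nonneg x) (by norm_num),
        Real.rpow_neg (by norm_num : (0:ℝ) ≤ 2)]
      field_simp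
    have hV1le : V1 ≤ ENNReal.ofReal (V1.toReal + 1) :=
      le_trans (le_of_eq (ENNReal.ofReal_toReal hV1top).symm)
        (ENNReal.ofReal_le_ofReal (by linarith))
    calc ∫⁻ z in Metric.ball (0 : EuclideanSpace ℝ (Fin n)) r, ENNReal.ofReal (‖x + z‖ ^ (-b))
        ≤ ∫⁻ _ in Metric.ball (0 : EuclideanSpace ℝ (Fin n)) r,
            ENNReal.ofReal ((‖x‖ / 2) ^ (-b)) := setLIntegral_mono measurable_const hpt
      _ = ENNReal.ofReal ((‖x‖ / 2) ^ (-b)) *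
            volume (Metric.ball (0 : EuclideanSpace ℝ (Fin n)) r) := setLIntegral_const _ _
      _ = ENNReal.ofReal ((‖x‖ / 2) ^ (-b)) * (ENNReal.ofReal (r ^ n) * V1) := by
          rw [hV1def, Measure.addHaar_ball volume (0 : EuclideanSpace ℝ (Fin n)) hr.le,
            finrank_euclideanSpace_fin]
      _ ≤ ENNReal.ofReal ((‖x‖ / 2) ^ (-b)) *
            (ENNReal.ofReal (r ^ n) * ENNReal.ofReal (V1.toReal + 1)) := by gcongr
      _ = ENNReal.ofReal ((‖x‖ / 2) ^ (-b) * (r ^ n * (V1.toReal + 1))) := by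
          rw [← ENNReal.ofReal_mul (by positivity), ← ENNReal.ofReal_mul (by positivity)]
      _ ≤ ENNReal.ofReal ((2 ^ b * (V1.toReal + 1) + K * 3 ^ n * 2 ^ b) *
            (r ^ n * ‖x‖ ^ (-b))) := by
          apply ENNReal.ofReal_le_ofReal
          rw [hdiv]
          have h3 : (0:ℝ) ≤ K * 3 ^ n * 2 ^ b := by positivity
          nlinarith [hP, pow_pos hr n, Real.rpow_pos_of_pos hxpos (-b),
            ENNReal.toReal_nonneg (a := V1)]
  · -- near case : `‖x‖ < 2r`
    have htrans : ∫⁻ z in Metric.ball (0 : EuclideanSpace ℝ (Fin n)) r,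
        ENNReal.ofReal (‖x + z‖ ^ (-b)) =
        ∫⁻ w in Metric.ball x r, ENNReal.ofReal (‖w‖ ^ (-b)) := by
      have hmp := (measurePreserving_add_left
        (volume : Measure (EuclideanSpace ℝ (Fin n))) x).setLIntegral_comp_preimage_emb
        (measurableEmbedding_addLeft x)
        (fun w => ENNReal.ofReal (‖w‖ ^ (-b))) (Metric.ball x r)
      have hset : (fun z => x + z) ⁻¹' (Metric.ball x r) =
          Metric.ball (0 : EuclideanSpace ℝ (Fin n)) r := by
        ext z
        simp [Metric.mem_ball, dist_eq_norm, add_sub_cancel_left]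
      rw [hset] at hmp
      exact hmp
    have hsub2 : Metric.ball x r ⊆ Metric.ball (0 : EuclideanSpace ℝ (Fin n)) (3 * r) := by
      intro w hw
      have hd : ‖w - x‖ < r := by
        have := Metric.mem_ball.1 hw
        rwa [dist_eq_norm] at this
      have h1 : ‖w‖ ≤ ‖w - x‖ + ‖x‖ := by
        calc ‖w‖ = ‖(w - x) + x‖ := by rw [sub_add_cancel]
          _ ≤ ‖w - x‖ + ‖x‖ := norm_add_le _ _
      exact mem_ball_zero_iff.2 (by linarith)
    have hrball := hKball (3 * r) (by positivity)
    have hreal : K * (3 * r) ^ ((n:ℝ) - b) ≤ (K * 3 ^ n * 2 ^ b) * (r ^ n * ‖x‖ ^ (-b)) := by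
      have e1 : (3 * r : ℝ) ^ ((n:ℝ) - b) = 3 ^ ((n:ℝ) - b) * r ^ ((n:ℝ) - b) :=
        Real.mul_rpow (by norm_num) hr.le
      have e2 : r ^ ((n:ℝ) - b) = r ^ (n:ℕ) * r ^ (-b) := by
        rw [show (n:ℝ) - b = (n:ℝ) + (-b) by ring, Real.rpow_add hr, Real.rpow_natCast]
      have h31 : (3:ℝ) ^ ((n:ℝ) - b) ≤ 3 ^ (n:ℕ) := by
        have := Real.rpow_le_rpow_of_exponent_le (by norm_num : (1:ℝ) ≤ 3)
          (by linarith : (n:ℝ) - b ≤ (n:ℝ))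
        rwa [Real.rpow_natCast] at this
      have hrb : r ^ (-b) ≤ 2 ^ b * ‖x‖ ^ (-b) := by
        have j1 : (2 * r : ℝ) ^ (-b) ≤ ‖x‖ ^ (-b) :=
          Real.rpow_le_rpow_of_nonpos hxpos hcase.le (neg_nonpos.2 hb)
        have j2 : (2 * r : ℝ) ^ (-b) = 2 ^ (-b) * r ^ (-b) :=
          Real.mul_rpow (by norm_num) hr.le
        have j3 : (2:ℝ) ^ (-b) = (2 ^ b)⁻¹ := Real.rpow_neg (by norm_num) b
        have j4 : r ^ (-b) = 2 ^ b * ((2 * r : ℝ) ^ (-b)) := by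
          rw [j2, j3]
          field_simp
        rw [j4]
        exact mul_le_mul_of_nonneg_left j1 h2b.le
      calc K * (3 * r) ^ ((n:ℝ) - b)
          = K * (3 ^ ((n:ℝ) - b) * (r ^ (n:ℕ) * r ^ (-b))) := by rw [e1, e2]
        _ ≤ K * (3 ^ (n:ℕ) * (r ^ (n:ℕ) * (2 ^ b * ‖x‖ ^ (-b)))) := by
            apply mul_le_mul_of_nonneg_left _ hK.le
            have hrn : (0:ℝ) < r ^ (n:ℕ) := pow_pos hr n
            have h3nb : (0:ℝ) < (3:ℝ) ^ ((n:ℝ) - b) := Real.rpow_pos_of_pos (by norm_num) _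
            have hrnb : (0:ℝ) < r ^ (-b) := Real.rpow_pos_of_pos hr _
            nlinarith [mul_le_mul h31 (mul_le_mul_of_nonneg_left hrb hrn.le)
              (by positivity) (by positivity)]
        _ = (K * 3 ^ n * 2 ^ b) * (r ^ n * ‖x‖ ^ (-b)) := by ring
    calc ∫⁻ z in Metric.ball (0 : EuclideanSpace ℝ (Fin n)) r, ENNReal.ofReal (‖x + z‖ ^ (-b))
        = ∫⁻ w in Metric.ball x r, ENNReal.ofReal (‖w‖ ^ (-b)) := htrans
      _ ≤ ∫⁻ w in Metric.ball (0 : EuclideanSpace ℝ (Fin n)) (3 * r),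
            ENNReal.ofReal (‖w‖ ^ (-b)) := lintegral_mono_set hsub2
      _ ≤ ENNReal.ofReal (K * (3 * r) ^ ((n:ℝ) - b)) := hrball
      _ ≤ ENNReal.ofReal ((K * 3 ^ n * 2 ^ b) * (r ^ n * ‖x‖ ^ (-b))) :=
          ENNReal.ofReal_le_ofReal hreal
      _ ≤ ENNReal.ofReal ((2 ^ b * (V1.toReal + 1) + K * 3 ^ n * 2 ^ b) *
            (r ^ n * ‖x‖ ^ (-b))) := by
          apply ENNReal.ofReal_le_ofReal
          have : (0:ℝ) ≤ 2 ^ b * (V1.toReal + 1) := by positivity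
          nlinarith [hP]

/-- Averaged translation estimate for the product weight `|x|^{-a}|y|^{-a}`, with
`0 ≤ a` and `2a < n`. -/
theorem stmt_1 {n : ℕ} (hn : 1 ≤ n) (a : ℝ) (ha : 0 ≤ a) (ha' : 2 * a < n) :
    ∃ C : ℝ, 0 < C ∧ ∀ r : ℝ, 0 < r →
      ∀ x y : EuclideanSpace ℝ (Fin n), x ≠ 0 → y ≠ 0 →
        (ENNReal.ofReal (r ^ n))⁻¹ *
          ∫⁻ z in Metric.ball (0 : EuclideanSpace ℝ (Fin n)) r,
            ENNReal.ofReal (‖x + z‖ ^ (-a) * ‖y + z‖ ^ (-a)) ≤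
        ENNReal.ofReal (C * (‖x‖ ^ (-a) * ‖y‖ ^ (-a))) := by
  obtain ⟨C, hC, hkey⟩ := aux_key hn (b := 2 * a) (by positivity) ha'
  refine ⟨C, hC, fun r hr x y hx hy => ?_⟩
  have hrn : (0:ℝ) < r ^ n := pow_pos hr n
  set μ := (volume : Measure (EuclideanSpace ℝ (Fin n))).restrict
    (Metric.ball (0 : EuclideanSpace ℝ (Fin n)) r) with hμdef
  set f : EuclideanSpace ℝ (Fin n) → ℝ≥0∞ := fun z => ENNReal.ofReal (‖x + z‖ ^ (-a))
    with hfdef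
  set g : EuclideanSpace ℝ (Fin n) → ℝ≥0∞ := fun z => ENNReal.ofReal (‖y + z‖ ^ (-a))
    with hgdef
  have hmf : AEMeasurable f μ :=
    ((((continuous_const.add continuous_id).norm.measurable).pow
      measurable_const).ennreal_ofReal).aemeasurable
  have hmg : AEMeasurable g μ :=
    ((((continuous_const.add continuous_id).norm.measurable).pow
      measurable_const).ennreal_ofReal).aemeasurable
  have hold := ENNReal.lintegral_mul_le_Lp_mul_Lq μ
    (⟨by norm_num, by norm_num, by norm_num⟩ : Real.HolderConjugate 2 2) hmf hmg
  -- identify squares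
  have hsq : ∀ (w : EuclideanSpace ℝ (Fin n)) (z : EuclideanSpace ℝ (Fin n)),
      ENNReal.ofReal (‖w + z‖ ^ (-a)) ^ (2:ℝ) = ENNReal.ofReal (‖w + z‖ ^ (-(2*a))) := by
    intro w z
    rw [ENNReal.ofReal_rpow_of_nonneg (by positivity) (by norm_num),
      ← Real.rpow_mul (norm_nonneg _)]
    norm_num
    ring_nf
  have hf2 : ∫⁻ z, f z ^ (2:ℝ) ∂μ ≤ ENNReal.ofReal (C * (r ^ n * ‖x‖ ^ (-(2*a)))) := by
    have : ∫⁻ z, f z ^ (2:ℝ) ∂μ = ∫⁻ z, ENNReal.ofReal (‖x + z‖ ^ (-(2*a))) ∂μ :=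
      lintegral_congr fun z => hsq x z
    rw [this]
    exact hkey r hr x hx
  have hg2 : ∫⁻ z, g z ^ (2:ℝ) ∂μ ≤ ENNReal.ofReal (C * (r ^ n * ‖y‖ ^ (-(2*a)))) := by
    have : ∫⁻ z, g z ^ (2:ℝ) ∂μ = ∫⁻ z, ENNReal.ofReal (‖y + z‖ ^ (-(2*a))) ∂μ :=
      lintegral_congr fun z => hsq y z
    rw [this]
    exact hkey r hr y hy
  -- take square roots
  have hsplit : ∀ w : EuclideanSpace ℝ (Fin n), w ≠ 0 →
      (C * (r ^ n * ‖w‖ ^ (-(2*a)))) ^ (1/(2:ℝ)) =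
        C ^ (1/(2:ℝ)) * ((r ^ n : ℝ) ^ (1/(2:ℝ)) * ‖w‖ ^ (-a)) := by
    intro w hw
    have hwpos : 0 < ‖w‖ := norm_pos_iff.2 hw
    rw [Real.mul_rpow hC.le (by positivity), Real.mul_rpow hrn.le (by positivity),
      ← Real.rpow_mul (norm_nonneg _)]
    have he : -(2*a) * (1/(2:ℝ)) = -a := by ring
    rw [he]
  have hroot : ∀ (w : EuclideanSpace ℝ (Fin n)), w ≠ 0 →
      ∀ I : ℝ≥0∞, I ≤ ENNReal.ofReal (C * (r ^ n * ‖w‖ ^ (-(2*a)))) →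
      I ^ (1/(2:ℝ)) ≤ ENNReal.ofReal (C ^ (1/(2:ℝ)) * ((r ^ n : ℝ) ^ (1/(2:ℝ)) * ‖w‖ ^ (-a))) := by
    intro w hw I hI
    calc I ^ (1/(2:ℝ)) ≤ (ENNReal.ofReal (C * (r ^ n * ‖w‖ ^ (-(2*a))))) ^ (1/(2:ℝ)) :=
          ENNReal.rpow_le_rpow hI (by norm_num)
      _ = ENNReal.ofReal ((C * (r ^ n * ‖w‖ ^ (-(2*a)))) ^ (1/(2:ℝ))) :=
          ENNReal.ofReal_rpow_of_nonneg (by positivity) (by norm_num)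
      _ = _ := by rw [hsplit w hw]
  have hfg : ∫⁻ z in Metric.ball (0 : EuclideanSpace ℝ (Fin n)) r,
      ENNReal.ofReal (‖x + z‖ ^ (-a) * ‖y + z‖ ^ (-a)) ≤
      ENNReal.ofReal (C ^ (1/(2:ℝ)) * ((r ^ n : ℝ) ^ (1/(2:ℝ)) * ‖x‖ ^ (-a))) *
      ENNReal.ofReal (C ^ (1/(2:ℝ)) * ((r ^ n : ℝ) ^ (1/(2:ℝ)) * ‖y‖ ^ (-a))) := by
    calc ∫⁻ z in Metric.ball (0 : EuclideanSpace ℝ (Fin n)) r,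
        ENNReal.ofReal (‖x + z‖ ^ (-a) * ‖y + z‖ ^ (-a))
        = ∫⁻ z, (f * g) z ∂μ := lintegral_congr fun z => ENNReal.ofReal_mul (by positivity)
      _ ≤ (∫⁻ z, f z ^ (2:ℝ) ∂μ) ^ (1/(2:ℝ)) * (∫⁻ z, g z ^ (2:ℝ) ∂μ) ^ (1/(2:ℝ)) := hold
      _ ≤ _ := mul_le_mul' (hroot x hx _ hf2) (hroot y hy _ hg2)
  have hcomb : (C ^ (1/(2:ℝ)) * ((r ^ n : ℝ) ^ (1/(2:ℝ)) * ‖x‖ ^ (-a))) *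
      (C ^ (1/(2:ℝ)) * ((r ^ n : ℝ) ^ (1/(2:ℝ)) * ‖y‖ ^ (-a))) =
      r ^ n * (C * (‖x‖ ^ (-a) * ‖y‖ ^ (-a))) := by
    have hC2 : C ^ (1/(2:ℝ)) * C ^ (1/(2:ℝ)) = C := by
      rw [← Real.rpow_add hC]
      norm_num
    have hr2 : (r ^ n : ℝ) ^ (1/(2:ℝ)) * (r ^ n : ℝ) ^ (1/(2:ℝ)) = r ^ n := by
      rw [← Real.rpow_add hrn]
      norm_num
    calc (C ^ (1/(2:ℝ)) * ((r ^ n : ℝ) ^ (1/(2:ℝ)) * ‖x‖ ^ (-a))) *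
        (C ^ (1/(2:ℝ)) * ((r ^ n : ℝ) ^ (1/(2:ℝ)) * ‖y‖ ^ (-a)))
        = (C ^ (1/(2:ℝ)) * C ^ (1/(2:ℝ))) *
          (((r ^ n : ℝ) ^ (1/(2:ℝ)) * (r ^ n : ℝ) ^ (1/(2:ℝ))) *
            (‖x‖ ^ (-a) * ‖y‖ ^ (-a))) := by ring
      _ = _ := by rw [hC2, hr2]; ring
  calc (ENNReal.ofReal (r ^ n))⁻¹ *
      ∫⁻ z in Metric.ball (0 : EuclideanSpace ℝ (Fin n)) r,
        ENNReal.ofReal (‖x + z‖ ^ (-a) * ‖y + z‖ ^ (-a))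
      ≤ (ENNReal.ofReal (r ^ n))⁻¹ *
        (ENNReal.ofReal (C ^ (1/(2:ℝ)) * ((r ^ n : ℝ) ^ (1/(2:ℝ)) * ‖x‖ ^ (-a))) *
         ENNReal.ofReal (C ^ (1/(2:ℝ)) * ((r ^ n : ℝ) ^ (1/(2:ℝ)) * ‖y‖ ^ (-a)))) :=
        mul_le_mul_right hfg _
    _ = (ENNReal.ofReal (r ^ n))⁻¹ *
        ENNReal.ofReal (r ^ n * (C * (‖x‖ ^ (-a) * ‖y‖ ^ (-a)))) := by
        rw [← ENNReal.ofReal_mul (by positivity), hcomb]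
    _ = (ENNReal.ofReal (r ^ n))⁻¹ *
        (ENNReal.ofReal (r ^ n) * ENNReal.ofReal (C * (‖x‖ ^ (-a) * ‖y‖ ^ (-a)))) := by
        rw [ENNReal.ofReal_mul (by positivity)]
    _ = ENNReal.ofReal (C * (‖x‖ ^ (-a) * ‖y‖ ^ (-a))) := by
        rw [← mul_assoc, ENNReal.inv_mul_cancel
          (ENNReal.ofReal_pos.2 hrn).ne' ENNReal.ofReal_ne_top, one_mul]
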